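/- For 0 < a < b, set η₁ = b + √(b²−a²), η₂ = b − √(b²−a²). Then η₁η₂ = a², (η₁+η₂)/2 = b, and the real number x₀ = (3/4)·(η₁^{1/3} + η₂^{1/3})² / (η₁^{2/3} + η₁^{1/3}η₂^{1/3} + η₂^{2/3}) satisfies x₀(9−8x₀)²/(4x₀−3)³ = b²/a², where cube roots are positive reals. Moreover 4x₀ − 3 = 3·η₁^{1/3}η₂^{1/3}/(η₁^{2/3} + η₁^{1/3}η₂^{1/3} + η₂^{2/3}). -/

import Mathlib

open Real

/-- Explicit real solution of x(9-8x)²/(4x-3)³ = b²/a² for 0 < a < b. -/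
theorem cubic_solution (a b : ℝ) (ha : 0 < a) (hab : a < b) :
    let η₁ := b + Real.sqrt (b^2 - a^2)
    let η₂ := b - Real.sqrt (b^2 - a^2)
    let x₀ := (3/4) * (η₁ ^ ((1:ℝ)/3) + η₂ ^ ((1:ℝ)/3))^2 /
      (η₁ ^ ((2:ℝ)/3) + η₁ ^ ((1:ℝ)/3) * η₂ ^ ((1:ℝ)/3) + η₂ ^ ((2:ℝ)/3))
    η₁ * η₂ = a^2 ∧ (η₁ + η₂) / 2 = b ∧
    x₀ * (9 - 8*x₀)^2 / (4*x₀ - 3)^3 = b^2 / a^2 ∧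
    4*x₀ - 3 = 3 * η₁ ^ ((1:ℝ)/3) * η₂ ^ ((1:ℝ)/3) /
      (η₁ ^ ((2:ℝ)/3) + η₁ ^ ((1:ℝ)/3) * η₂ ^ ((1:ℝ)/3) + η₂ ^ ((2:ℝ)/3)) := by
  intro η₁ η₂ x₀
  have hb : 0 < b := ha.trans hab
  have hge : (0:ℝ) ≤ b^2 - a^2 := by nlinarith
  have hs : Real.sqrt (b^2 - a^2) ^ 2 = b^2 - a^2 := Real.sq_sqrt hge
  have hsnn : 0 ≤ Real.sqrt (b^2 - a^2) := Real.sqrt_nonneg _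
  have hslt : Real.sqrt (b^2 - a^2) < b := by nlinarith
  have h1 : 0 < η₁ := by simp only [η₁]; linarith
  have h2 : 0 < η₂ := by simp only [η₂]; linarith
  set u := η₁ ^ ((1:ℝ)/3) with hu
  set v := η₂ ^ ((1:ℝ)/3) with hv
  have hupos : 0 < u := Real.rpow_pos_of_pos h1 _
  have hvpos : 0 < v := Real.rpow_pos_of_pos h2 _
  have hu3 : u ^ 3 = η₁ := by
    rw [hu, ← Real.rpow_natCast (η₁ ^ ((1:ℝ)/3)) 3, ← Real.rpow_mul h1.le]
    norm_num
  have hv3 : v ^ 3 = η₂ := by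
    rw [hv, ← Real.rpow_natCast (η₂ ^ ((1:ℝ)/3)) 3, ← Real.rpow_mul h2.le]
    norm_num
  have hu2 : η₁ ^ ((2:ℝ)/3) = u ^ 2 := by
    rw [hu, ← Real.rpow_natCast (η₁ ^ ((1:ℝ)/3)) 2, ← Real.rpow_mul h1.le]
    norm_num
  have hv2 : η₂ ^ ((2:ℝ)/3) = v ^ 2 := by
    rw [hv, ← Real.rpow_natCast (η₂ ^ ((1:ℝ)/3)) 2, ← Real.rpow_mul h2.le]
    norm_num
  have hprod : η₁ * η₂ = a ^ 2 := by
    simp only [η₁, η₂]; nlinarith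
  have hsum : η₁ + η₂ = 2 * b := by simp only [η₁, η₂]; ring
  have hD : 0 < u ^ 2 + u * v + v ^ 2 := by positivity
  have hx0 : x₀ = (3/4) * (u + v)^2 / (u ^ 2 + u * v + v ^ 2) := by
    simp only [x₀, hu2, hv2]
    rfl
  refine ⟨hprod, by linarith, ?_, ?_⟩
  · have ha2 : a ^ 2 = u ^ 3 * v ^ 3 := by rw [hu3, hv3, hprod]
    have hb2 : 2 * b = u ^ 3 + v ^ 3 := by rw [hu3, hv3, hsum]
    rw [hx0]
    have h43 : 4 * ((3/4) * (u + v)^2 / (u ^ 2 + u * v + v ^ 2)) - 3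
        = 3 * (u * v) / (u ^ 2 + u * v + v ^ 2) := by
      field_simp
      ring
    rw [h43]
    have h98 : 9 - 8 * ((3/4) * (u + v)^2 / (u ^ 2 + u * v + v ^ 2))
        = 3 * (u ^ 2 - u * v + v ^ 2) / (u ^ 2 + u * v + v ^ 2) := by
      field_simp
      ring
    rw [h98]
    rw [ha2]
    have hb' : b = (u ^ 3 + v ^ 3) / 2 := by linarith
    rw [hb']
    field_simp
    ring
  · rw [hx0, hu2, hv2]
    field_simp
    ring
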